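/- arXiv:2010.08828 — 2 statements merged into one kernel-verified Lean document; each statement's English description precedes it below -/
import Mathlib

section
/- Let G be a Hamiltonian finite simple graph on n > 3 vertices, where n is even, and let α be any magnetic potential on G. Then 2 ≤ λ_{n/2+1}(Δ_α^G) and 2 < λ_{n/2+2}(Δ_α^G). -/
open Classical in
/-- The discrete magnetic Laplacian of a simple graph `G` on `Fin n` with magnetic
potential `α`. -/
noncomputable def magLap {n : ℕ} (G : SimpleGraph (Fin n)) (α : Fin n → Fin n → ℝ) :
    Matrix (Fin n) (Fin n) ℂ :=
  Matrix.of fun u v =>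
    if u = v then ((G.neighborSet u).ncard : ℂ)
    else if G.Adj u v then -Complex.exp (α u v * Complex.I) else 0

lemma magLap_isHermitian {n : ℕ} (G : SimpleGraph (Fin n)) (α : Fin n → Fin n → ℝ)
    (hα : ∀ u v, α v u = -α u v) : (magLap G α).IsHermitian := by
  rw [Matrix.IsHermitian]
  ext u v
  simp only [Matrix.conjTranspose_apply, magLap, Matrix.of_apply]
  by_cases huv : u = v
  · subst huv; simp
  · have hvu : ¬ v = u := fun h => huv h.symm
    rw [if_neg hvu, if_neg huv]
    by_cases hadj : G.Adj u v
    · rw [if_pos hadj.symm, if_pos hadj, star_neg]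
      have h1 : star (Complex.exp ((α v u : ℂ) * Complex.I)) =
          Complex.exp ((starRingEnd ℂ) ((α v u : ℂ) * Complex.I)) :=
        (Complex.exp_conj _).symm
      rw [h1]
      congr 1
      rw [hα u v]
      simp [map_mul, Complex.conj_ofReal, Complex.conj_I]
    · rw [if_neg (fun h => hadj h.symm), if_neg hadj, star_zero]

/-- The `k`-th smallest eigenvalue (1-indexed, with multiplicity) of a Hermitian
matrix, as an extended real number; `⊥` for `k = 0` and `⊤` for `k > n`. -/
noncomputable def lamb {n : ℕ} {A : Matrix (Fin n) (Fin n) ℂ} (hA : A.IsHermitian) (k : ℕ) :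
    EReal :=
  if h : 1 ≤ k ∧ k ≤ n then
    (((hA.eigenvalues ∘ Tuple.sort hA.eigenvalues) ⟨k - 1, by omega⟩ : ℝ) : EReal)
  else if k = 0 then ⊥ else ⊤

/-- The matching number of a graph: the maximal number of pairwise independent edges. -/
noncomputable def matchingNumber {n : ℕ} (G : SimpleGraph (Fin n)) : ℕ :=
  sSup {k : ℕ | ∃ M : G.Subgraph, M.IsMatching ∧ M.edgeSet.ncard = k}


open Finset Complex Matrix ComplexConjugate

section Counting
variable {n : ℕ}


lemma count_ge_of_sorted_lt {f : Fin n → ℝ} (hf : Monotone f) (t : ℝ) (m : Fin n)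
    (hm : f m < t) : (m : ℕ) + 1 ≤ (Finset.univ.filter (fun i => f i < t)).card := by
  have hsub : Finset.Iic m ⊆ Finset.univ.filter (fun i => f i < t) := by
    intro i hi
    simp only [Finset.mem_Iic] at hi
    simp only [Finset.mem_filter, Finset.mem_univ, true_and]
    exact lt_of_le_of_lt (hf hi) hm
  calc (m : ℕ) + 1 = (Finset.Iic m).card := (Fin.card_Iic m).symm
    _ ≤ _ := Finset.card_le_card hsub

lemma sorted_ge_of_count {f : Fin n → ℝ} (hf : Monotone f) (t : ℝ) (m : Fin n)
    (h : (Finset.univ.filter (fun i => f i < t)).card ≤ (m : ℕ)) : t ≤ f m := by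
  by_contra hc
  push_neg at hc
  have := count_ge_of_sorted_lt hf t m hc
  omega

lemma count_ge_of_sorted_le {f : Fin n → ℝ} (hf : Monotone f) (t : ℝ) (m : Fin n)
    (hm : f m ≤ t) : (m : ℕ) + 1 ≤ (Finset.univ.filter (fun i => f i ≤ t)).card := by
  have hsub : Finset.Iic m ⊆ Finset.univ.filter (fun i => f i ≤ t) := by
    intro i hi
    simp only [Finset.mem_Iic] at hi
    simp only [Finset.mem_filter, Finset.mem_univ, true_and]
    exact le_trans (hf hi) hm
  calc (m : ℕ) + 1 = (Finset.Iic m).card := (Fin.card_Iic m).symm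
    _ ≤ _ := Finset.card_le_card hsub

lemma sorted_gt_of_count {f : Fin n → ℝ} (hf : Monotone f) (t : ℝ) (m : Fin n)
    (h : (Finset.univ.filter (fun i => f i ≤ t)).card ≤ (m : ℕ)) : t < f m := by
  by_contra hc
  push_neg at hc
  have := count_ge_of_sorted_le hf t m hc
  omega

lemma card_filter_perm (σ : Equiv.Perm (Fin n)) (p : Fin n → Prop) [DecidablePred p] :
    (Finset.univ.filter (fun i => p (σ i))).card = (Finset.univ.filter p).card := by
  apply Finset.card_nbij (fun i => σ i)
  · intro i hi
    simp only [Finset.mem_coe, Finset.mem_filter, Finset.mem_univ, true_and] at *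
    exact hi
  · intro i hi j hj hij
    exact σ.injective hij
  · intro j hj
    refine ⟨σ.symm j, ?_, by simp⟩
    simp only [Finset.mem_coe, Finset.mem_filter, Finset.mem_univ, true_and] at *
    simpa using hj

end Counting


variable {n : ℕ}


noncomputable def zeta (α : Fin n → Fin n → ℝ) (u v : Fin n) : ℂ :=
  Complex.exp ((α u v : ℂ) * Complex.I)

lemma normSq_zeta (α : Fin n → Fin n → ℝ) (u v : Fin n) :
    Complex.normSq (zeta α u v) = 1 := by
  have : ‖zeta α u v‖ = 1 := Complex.norm_exp_ofReal_mul_I _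
  rw [← Complex.sq_norm, this, one_pow]

lemma zeta_ne_zero (α : Fin n → Fin n → ℝ) (u v : Fin n) : zeta α u v ≠ 0 :=
  Complex.exp_ne_zero _

lemma zeta_mul_zeta (α : Fin n → Fin n → ℝ) (hα : ∀ u v, α v u = -α u v) (u v : Fin n) :
    zeta α v u * zeta α u v = 1 := by
  rw [zeta, zeta, ← Complex.exp_add, hα u v]
  push_cast
  ring_nf
  exact Complex.exp_zero

open Classical in
lemma quad_form (G : SimpleGraph (Fin n)) (α : Fin n → Fin n → ℝ) (x : Fin n → ℂ) :
    (star x ⬝ᵥ (magLap G α).mulVec x).re =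
      (1/2) * ∑ u : Fin n, ∑ v : Fin n,
        (if G.Adj u v then Complex.normSq (x u - zeta α u v * x v) else 0) := by
  have hL : (star x ⬝ᵥ (magLap G α).mulVec x) =
      ∑ u : Fin n, ∑ v : Fin n, conj (x u) * ((magLap G α) u v * x v) := by
    simp [dotProduct, Matrix.mulVec, Finset.mul_sum]
  set d : Fin n → ℝ := fun u => ((G.neighborSet u).ncard : ℝ) with hd
  have hterm : ∀ u v, (conj (x u) * ((magLap G α) u v * x v)).re =
      (if u = v then d u * normSq (x u) else 0)
      + (if G.Adj u v then -((conj (x u) * (zeta α u v * x v)).re) else 0) := by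
    intro u v
    by_cases h : u = v
    · subst h
      have h1 : (magLap G α) u u = ((G.neighborSet u).ncard : ℂ) := by
        simp [magLap]
      rw [h1, if_pos rfl, if_neg (G.irrefl), add_zero]
      have h2 : conj (x u) * (((G.neighborSet u).ncard : ℂ) * x u)
          = (((G.neighborSet u).ncard : ℝ) : ℂ) * (normSq (x u) : ℂ) := by
        rw [Complex.normSq_eq_conj_mul_self]
        push_cast
        ring
      rw [h2]
      simp [hd]
    · rw [if_neg h]
      by_cases hadj : G.Adj u v
      · have h1 : (magLap G α) u v = -(zeta α u v) := by
          simp [magLap, h, hadj, zeta]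
        rw [h1, if_pos hadj]
        ring_nf
        simp
      · have h1 : (magLap G α) u v = 0 := by
          simp [magLap, h, hadj]
        rw [h1, if_neg hadj]
        simp
  have hre : (star x ⬝ᵥ (magLap G α).mulVec x).re =
      ∑ u : Fin n, ∑ v : Fin n, (conj (x u) * ((magLap G α) u v * x v)).re := by
    rw [hL, Complex.re_sum]
    exact Finset.sum_congr rfl fun u _ => Complex.re_sum _ _
  rw [hre]
  have hsplit : ∀ u : Fin n,
      ∑ v : Fin n, (conj (x u) * ((magLap G α) u v * x v)).re
      = d u * normSq (x u)
        - ∑ v : Fin n, (if G.Adj u v then (conj (x u) * (zeta α u v * x v)).re else 0) := by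
    intro u
    rw [Finset.sum_congr rfl fun v _ => hterm u v, Finset.sum_add_distrib]
    congr 1
    · simp [Finset.sum_ite_eq]
    · rw [← Finset.sum_neg_distrib]
      exact Finset.sum_congr rfl fun v _ => by by_cases hadj : G.Adj u v <;> simp [hadj]
  rw [Finset.sum_congr rfl fun u _ => hsplit u, Finset.sum_sub_distrib]
  -- degree counts
  have hdeg : ∀ u : Fin n, d u = ((Finset.univ.filter (G.Adj u)).card : ℝ) := by
    intro u
    show ((G.neighborSet u).ncard : ℝ) = _
    congr 1
    rw [Set.ncard_eq_toFinset_card']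
    congr 1
    ext v
    simp [SimpleGraph.mem_neighborSet]
  have hA : ∀ (f : Fin n → ℝ) u, ∑ v : Fin n, (if G.Adj u v then f u else 0)
      = d u * f u := by
    intro f u
    rw [← Finset.sum_filter, Finset.sum_const, nsmul_eq_mul, hdeg u]
  -- expand RHS
  have hterm2 : ∀ u v : Fin n,
      (if G.Adj u v then Complex.normSq (x u - zeta α u v * x v) else 0)
      = (if G.Adj u v then normSq (x u) else 0) + (if G.Adj u v then normSq (x v) else 0)
        - 2 * (if G.Adj u v then (conj (x u) * (zeta α u v * x v)).re else 0) := by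
    intro u v
    by_cases hadj : G.Adj u v
    · simp only [if_pos hadj]
      rw [Complex.normSq_sub]
      have h1 : normSq (zeta α u v * x v) = normSq (x v) := by
        rw [Complex.normSq_mul, normSq_zeta, one_mul]
      have h2 : (x u * conj (zeta α u v * x v)).re
          = (conj (x u) * (zeta α u v * x v)).re := by
        rw [← Complex.conj_re (x u * conj (zeta α u v * x v))]
        rw [_root_.map_mul, Complex.conj_conj]
      rw [h1, h2]
    · simp [hadj]
  rw [Finset.sum_congr rfl fun u (_ : u ∈ univ) =>
    Finset.sum_congr rfl fun v (_ : v ∈ univ) => hterm2 u v]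
  have hsum1 : ∑ u : Fin n, ∑ v : Fin n, (if G.Adj u v then normSq (x u) else 0)
      = ∑ u : Fin n, d u * normSq (x u) :=
    Finset.sum_congr rfl fun u _ => hA (fun u => normSq (x u)) u
  have hsum2 : ∑ u : Fin n, ∑ v : Fin n, (if G.Adj u v then normSq (x v) else 0)
      = ∑ u : Fin n, d u * normSq (x u) := by
    rw [Finset.sum_comm]
    refine Finset.sum_congr rfl fun v _ => ?_
    rw [← hA (fun v => normSq (x v)) v]
    exact Finset.sum_congr rfl fun u _ => if_congr (SimpleGraph.adj_comm G u v) rfl rfl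
  have expand : ∀ u : Fin n, ∑ v : Fin n,
      ((if G.Adj u v then normSq (x u) else 0) + (if G.Adj u v then normSq (x v) else 0)
        - 2 * (if G.Adj u v then (conj (x u) * (zeta α u v * x v)).re else 0))
      = (∑ v : Fin n, (if G.Adj u v then normSq (x u) else 0))
        + (∑ v : Fin n, (if G.Adj u v then normSq (x v) else 0))
        - 2 * ∑ v : Fin n, (if G.Adj u v then (conj (x u) * (zeta α u v * x v)).re else 0) := by
    intro u
    rw [Finset.sum_sub_distrib, Finset.sum_add_distrib, Finset.mul_sum]
  rw [Finset.sum_congr rfl fun u (_ : u ∈ univ) => expand u]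
  rw [Finset.sum_sub_distrib, Finset.sum_add_distrib, hsum1, hsum2, ← Finset.mul_sum]
  ring

lemma phi_bijective (hn : 0 < n) (hne : Even n) :
    Function.Bijective (fun p : Fin (n/2) × Bool =>
      ((2 * p.1.val + (if p.2 then 1 else 0) : ℕ) : ZMod n)) := by
  haveI : NeZero n := ⟨by omega⟩
  have hmod : n % 2 = 0 := Nat.even_iff.mp hne
  rw [Fintype.bijective_iff_injective_and_card]
  constructor
  · rintro ⟨j, b⟩ ⟨k, c⟩ h
    simp only at h
    have hj := j.isLt
    have hk := k.isLt
    have h1 : 2 * j.val + (if b then 1 else 0) < n := by split <;> omega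
    have h2 : 2 * k.val + (if c then 1 else 0) < n := by split <;> omega
    have := congrArg ZMod.val h
    rw [ZMod.val_natCast_of_lt h1, ZMod.val_natCast_of_lt h2] at this
    have hjk : j.val = k.val ∧ b = c := by
      cases b <;> cases c <;> simp_all <;> omega
    exact Prod.ext (Fin.ext hjk.1) hjk.2
  · simp [ZMod.card]
    omega

lemma sum_zmod_split [NeZero n] (hn : 0 < n) (hne : Even n) (f : ZMod n → ℝ) :
    ∑ i : ZMod n, f i
      = ∑ j : Fin (n/2), (f ((2*j.val : ℕ) : ZMod n) + f ((2*j.val + 1 : ℕ) : ZMod n)) := by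
  rw [← Fintype.sum_bijective _ (phi_bijective hn hne) _ f (fun p => rfl)]
  rw [Fintype.sum_prod_type]
  refine Finset.sum_congr rfl fun j _ => ?_
  rw [Fintype.sum_bool]
  simp [add_comm]

lemma zmod_two_ne_zero (hn : 3 < n) : (2 : ZMod n) ≠ 0 := by
  haveI : NeZero n := ⟨by omega⟩
  intro h
  have h2 : ((2 : ℕ) : ZMod n) = 0 := by push_cast; exact h
  have := congrArg ZMod.val h2
  rw [ZMod.val_natCast_of_lt (by omega)] at this
  simp at this

lemma normSq_rev (G : SimpleGraph (Fin n)) (α : Fin n → Fin n → ℝ)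
    (hα : ∀ u v, α v u = -α u v) (x : Fin n → ℂ) (u v : Fin n) :
    Complex.normSq (x v - zeta α v u * x u) = Complex.normSq (x u - zeta α u v * x v) := by
  have h1 := zeta_mul_zeta α hα u v
  have h2 : x v - zeta α v u * x u = -(zeta α v u) * (x u - zeta α u v * x v) := by
    linear_combination (-(x v)) * h1
  rw [h2, Complex.normSq_mul, Complex.normSq_neg, normSq_zeta, one_mul]

open Classical in
lemma quad_ge_cycle [NeZero n] (hn : 3 < n) (G : SimpleGraph (Fin n)) (α : Fin n → Fin n → ℝ)
    (hα : ∀ u v, α v u = -α u v) (x : Fin n → ℂ)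
    (e : ZMod n → Fin n) (he : Function.Bijective e)
    (hadj : ∀ i : ZMod n, G.Adj (e i) (e (i + 1))) :
    ∑ i : ZMod n, Complex.normSq (x (e i) - zeta α (e i) (e (i+1)) * x (e (i+1)))
      ≤ (star x ⬝ᵥ (magLap G α).mulVec x).re := by
  rw [quad_form]
  set F : Fin n × Fin n → ℝ := fun p =>
    if G.Adj p.1 p.2 then Complex.normSq (x p.1 - zeta α p.1 p.2 * x p.2) else 0 with hF
  have hFnonneg : ∀ p, 0 ≤ F p := by
    intro p
    rw [hF]
    dsimp only
    split
    · exact Complex.normSq_nonneg _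
    · exact le_refl 0
  have hdouble : ∑ u : Fin n, ∑ v : Fin n,
      (if G.Adj u v then Complex.normSq (x u - zeta α u v * x v) else 0)
      = ∑ p ∈ Finset.univ ×ˢ Finset.univ, F p := by
    rw [Finset.sum_product]
  set φ : ZMod n × Bool → Fin n × Fin n := fun q =>
    if q.2 then (e (q.1 + 1), e q.1) else (e q.1, e (q.1 + 1)) with hφ
  have hφinj : Function.Injective φ := by
    rintro ⟨i, b⟩ ⟨i', b'⟩ h
    have h2 : (2 : ZMod n) ≠ 0 := zmod_two_ne_zero hn
    cases b <;> cases b' <;>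
      simp only [hφ, if_true, if_false, Bool.false_eq_true, Prod.mk.injEq] at h
    · exact Prod.ext (he.1 h.1) rfl
    · exfalso
      have e1 : i = i' + 1 := he.1 h.1
      have e2 : i + 1 = i' := he.1 h.2
      rw [← e2] at e1
      have : (2 : ZMod n) = 0 := by linear_combination -e1
      exact h2 this
    · exfalso
      have e1 : i + 1 = i' := he.1 h.1
      have e2 : i = i' + 1 := he.1 h.2
      rw [← e1] at e2
      have : (2 : ZMod n) = 0 := by linear_combination -e2
      exact h2 this
    · exact Prod.ext (he.1 h.2) rfl
  have hsub : (Finset.univ.image φ) ⊆ Finset.univ ×ˢ Finset.univ := by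
    intro p _
    simp [Finset.mem_product]
  have himg : ∑ p ∈ Finset.univ.image φ, F p = ∑ q : ZMod n × Bool, F (φ q) :=
    Finset.sum_image (fun q _ q' _ h => hφinj h)
  have hle : ∑ p ∈ Finset.univ.image φ, F p ≤ ∑ p ∈ Finset.univ ×ˢ Finset.univ, F p :=
    Finset.sum_le_sum_of_subset_of_nonneg hsub (fun p _ _ => hFnonneg p)
  have hcompute : ∑ q : ZMod n × Bool, F (φ q)
      = 2 * ∑ i : ZMod n, Complex.normSq (x (e i) - zeta α (e i) (e (i+1)) * x (e (i+1))) := by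
    rw [Fintype.sum_prod_type]
    rw [Finset.mul_sum]
    refine Finset.sum_congr rfl fun i _ => ?_
    rw [Fintype.sum_bool]
    have hT : F (φ (i, true)) = Complex.normSq (x (e i) - zeta α (e i) (e (i+1)) * x (e (i+1))) := by
      simp only [hφ, hF, if_true]
      rw [if_pos (hadj i).symm]
      exact normSq_rev G α hα x (e i) (e (i+1))
    have hFt : F (φ (i, false)) = Complex.normSq (x (e i) - zeta α (e i) (e (i+1)) * x (e (i+1))) := by
      simp only [hφ, hF, Bool.false_eq_true, if_false]
      rw [if_pos (hadj i)]
    rw [hT, hFt]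
    ring
  rw [hdouble]
  have h2le : 2 * ∑ i : ZMod n, Complex.normSq (x (e i) - zeta α (e i) (e (i+1)) * x (e (i+1)))
      ≤ ∑ p ∈ Finset.univ ×ˢ Finset.univ, F p := by
    rw [← hcompute, ← himg]
    exact hle
  linarith


section DotLemmas
variable {n : ℕ} {ι : Type*} [Fintype ι] [DecidableEq ι]

lemma sum_dot (f : ι → Fin n → ℂ) (u : Fin n → ℂ) :
    (∑ i, f i) ⬝ᵥ u = ∑ i, (f i ⬝ᵥ u) := by
  simp only [dotProduct, Finset.sum_apply, Finset.sum_mul]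
  exact Finset.sum_comm

lemma dot_sum (u : Fin n → ℂ) (f : ι → Fin n → ℂ) :
    u ⬝ᵥ (∑ i, f i) = ∑ i, (u ⬝ᵥ f i) := by
  simp only [dotProduct, Finset.sum_apply, Finset.mul_sum]
  exact Finset.sum_comm

lemma key_dot (w : ι → Fin n → ℂ)
    (horth : ∀ i j, star (w i) ⬝ᵥ w j = if i = j then 1 else 0)
    (c d : ι → ℂ) :
    star (∑ i, c i • w i) ⬝ᵥ (∑ j, d j • w j) = ∑ i, conj (c i) * d i := by
  have hstar : star (∑ i, c i • w i) = ∑ i, conj (c i) • star (w i) := by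
    rw [star_sum]
    exact Finset.sum_congr rfl fun i _ => by rw [star_smul]; rfl
  rw [hstar, dot_sum]
  have hj : ∀ j, (∑ i, conj (c i) • star (w i)) ⬝ᵥ w j = conj (c j) := by
    intro j
    rw [sum_dot]
    have : ∀ i, (conj (c i) • star (w i)) ⬝ᵥ w j = conj (c i) * (if i = j then 1 else 0) := by
      intro i
      rw [smul_dotProduct, horth i j]
      simp
    rw [Finset.sum_congr rfl fun i _ => this i]
    simp
  have : ∀ j, (∑ i, conj (c i) • star (w i)) ⬝ᵥ (d j • w j)
      = conj (c j) * d j := by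
    intro j
    rw [dotProduct_smul, hj j]
    simp [mul_comm]
  rw [Finset.sum_congr rfl fun j _ => this j]

lemma exists_ker {W : Type*} [AddCommGroup W] [Module ℂ W] [FiniteDimensional ℂ W]
    (f : (ι → ℂ) →ₗ[ℂ] W) (h : Module.finrank ℂ W < Fintype.card ι) :
    ∃ c : ι → ℂ, c ≠ 0 ∧ f c = 0 := by
  by_contra hc
  push_neg at hc
  have hinj : Function.Injective f := by
    rw [← LinearMap.ker_eq_bot, LinearMap.ker_eq_bot']
    intro m hm
    by_contra hm0
    exact (hc m hm0) hm
  have := LinearMap.finrank_le_finrank_of_injective hinj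
  rw [Module.finrank_pi] at this
  omega

end DotLemmas

lemma par_id (z t ζ : ℂ) (hζ : Complex.normSq ζ = 1) :
    Complex.normSq (z - ζ * t)
      = 2 * Complex.normSq z + 2 * Complex.normSq t - Complex.normSq (z + ζ * t) := by
  rw [Complex.normSq_sub, Complex.normSq_add, Complex.normSq_mul, hζ]
  ring

def av {n : ℕ} (e : ZMod n → Fin n) (j : Fin (n/2)) : Fin n := e ((2*j.val : ℕ) : ZMod n)
def bv {n : ℕ} (e : ZMod n → Fin n) (j : Fin (n/2)) : Fin n := e ((2*j.val + 1 : ℕ) : ZMod n)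
def cv {n : ℕ} (e : ZMod n → Fin n) (j : Fin (n/2)) : Fin n := e ((2*j.val + 2 : ℕ) : ZMod n)

lemma quad_ge_matching {n : ℕ} [NeZero n] (hn : 3 < n) (hne : Even n)
    (G : SimpleGraph (Fin n)) (α : Fin n → Fin n → ℝ) (hα : ∀ u v, α v u = -α u v)
    (e : ZMod n → Fin n) (he : Function.Bijective e)
    (hadj : ∀ i : ZMod n, G.Adj (e i) (e (i + 1))) (x : Fin n → ℂ) :
    ∑ j : Fin (n/2),
      (Complex.normSq (x (av e j) - zeta α (av e j) (bv e j) * x (bv e j))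
       + Complex.normSq (x (bv e j) - zeta α (bv e j) (cv e j) * x (cv e j)))
    ≤ (star x ⬝ᵥ (magLap G α).mulVec x).re := by
  refine le_trans (le_of_eq ?_) (quad_ge_cycle hn G α hα x e he hadj)
  rw [sum_zmod_split (by omega) hne]
  refine Finset.sum_congr rfl fun j _ => ?_
  have h1 : ((2*j.val : ℕ) : ZMod n) + 1 = ((2*j.val+1 : ℕ) : ZMod n) := by push_cast; ring
  have h2 : ((2*j.val+1 : ℕ) : ZMod n) + 1 = ((2*j.val+2 : ℕ) : ZMod n) := by push_cast; ring
  rw [h1, h2]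
  rfl

lemma norm_partition {n : ℕ} [NeZero n] (hn : 3 < n) (hne : Even n)
    (e : ZMod n → Fin n) (he : Function.Bijective e) (x : Fin n → ℂ) :
    ∑ v : Fin n, Complex.normSq (x v)
      = ∑ j : Fin (n/2), (Complex.normSq (x (av e j)) + Complex.normSq (x (bv e j))) := by
  rw [← Fintype.sum_bijective e he (fun i => Complex.normSq (x (e i)))
      (fun v => Complex.normSq (x v)) (fun i => rfl)]
  exact sum_zmod_split (by omega) hne _

lemma combo_facts {n : ℕ} (G : SimpleGraph (Fin n)) (α : Fin n → Fin n → ℝ)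
    (w : Fin n → (Fin n → ℂ)) (lam : Fin n → ℝ)
    (horth : ∀ i j, star (w i) ⬝ᵥ w j = if i = j then 1 else 0)
    (heig : ∀ i, (magLap G α).mulVec (w i) = (lam i : ℂ) • w i)
    (s : Finset (Fin n)) (c : ↥s → ℂ) :
    ((star (∑ i : ↥s, c i • w ↑i) ⬝ᵥ (magLap G α).mulVec (∑ i : ↥s, c i • w ↑i)).re
        = ∑ i : ↥s, lam ↑i * Complex.normSq (c i))
    ∧ (∑ v : Fin n, Complex.normSq ((∑ i : ↥s, c i • w ↑i) v)
        = ∑ i : ↥s, Complex.normSq (c i)) := by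
  classical
  set x : Fin n → ℂ := ∑ i : ↥s, c i • w ↑i with hx
  have horth' : ∀ i j : ↥s, star (w ↑i) ⬝ᵥ w ↑j = if i = j then 1 else 0 := by
    intro i j
    rw [horth]
    exact if_congr (by exact ⟨fun h => Subtype.ext h, fun h => congrArg _ h⟩) rfl rfl
  have hxx : star x ⬝ᵥ x = ∑ i : ↥s, (Complex.normSq (c i) : ℂ) := by
    rw [hx, key_dot (fun i : ↥s => w ↑i) horth' c c]
    exact Finset.sum_congr rfl fun i _ => (Complex.normSq_eq_conj_mul_self).symm
  have hAx : (magLap G α).mulVec x = ∑ i : ↥s, (c i * (lam ↑i : ℂ)) • w ↑i := by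
    rw [hx]
    have : (magLap G α).mulVec (∑ i : ↥s, c i • w ↑i)
        = ∑ i : ↥s, c i • (magLap G α).mulVec (w ↑i) := by
      rw [← Matrix.mulVecLin_apply, map_sum]
      exact Finset.sum_congr rfl fun i _ => by rw [_root_.map_smul, Matrix.mulVecLin_apply]
    rw [this]
    exact Finset.sum_congr rfl fun i _ => by rw [heig, smul_smul]
  have hQ : star x ⬝ᵥ (magLap G α).mulVec x
      = ∑ i : ↥s, ((lam ↑i * Complex.normSq (c i) : ℝ) : ℂ) := by
    rw [hAx, hx, key_dot (fun i : ↥s => w ↑i) horth' c (fun i => c i * (lam ↑i : ℂ))]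
    refine Finset.sum_congr rfl fun i _ => ?_
    have h1 := Complex.normSq_eq_conj_mul_self (z := c i)
    push_cast
    linear_combination (-(lam ↑i : ℂ)) * h1
  constructor
  · rw [hQ, Complex.re_sum]
    exact Finset.sum_congr rfl fun i _ => by rw [Complex.ofReal_re]
  · have h1 : star x ⬝ᵥ x = ∑ v : Fin n, (Complex.normSq (x v) : ℂ) := by
      simp only [dotProduct, Pi.star_apply]
      exact Finset.sum_congr rfl fun v _ => by
        rw [Complex.star_def, ← Complex.normSq_eq_conj_mul_self]
    have h2 := hxx.symm.trans h1
    have h3 := congrArg Complex.re h2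
    rw [Complex.re_sum, Complex.re_sum] at h3
    simpa using h3.symm

open Classical in
lemma core_card_lt {n : ℕ} [NeZero n] (hn : 3 < n) (hne : Even n)
    (G : SimpleGraph (Fin n)) (α : Fin n → Fin n → ℝ) (hα : ∀ u v, α v u = -α u v)
    (e : ZMod n → Fin n) (he : Function.Bijective e)
    (hadj : ∀ i : ZMod n, G.Adj (e i) (e (i + 1)))
    (w : Fin n → (Fin n → ℂ)) (lam : Fin n → ℝ)
    (horth : ∀ i j, star (w i) ⬝ᵥ w j = if i = j then 1 else 0)
    (heig : ∀ i, (magLap G α).mulVec (w i) = (lam i : ℂ) • w i) :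
    (Finset.univ.filter (fun i => lam i < 2)).card ≤ n / 2 := by
  by_contra hbig
  push_neg at hbig
  set s := Finset.univ.filter (fun i => lam i < 2) with hs
  set L1 : (Fin n → ℂ) →ₗ[ℂ] (Fin (n/2) → ℂ) :=
    LinearMap.pi (fun j => LinearMap.proj (av e j)
      + zeta α (av e j) (bv e j) • LinearMap.proj (bv e j)) with hL1
  set T : (↥s → ℂ) →ₗ[ℂ] (Fin n → ℂ) :=
    { toFun := fun c => ∑ i : ↥s, c i • w ↑i
      map_add' := by
        intro p q
        simp only [Pi.add_apply, add_smul]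
        rw [Finset.sum_add_distrib]
      map_smul' := by
        intro m p
        simp only [Pi.smul_apply, smul_eq_mul, RingHom.id_apply, ← smul_smul]
        rw [Finset.smul_sum] } with hT
  have hrank : Module.finrank ℂ (Fin (n/2) → ℂ) < Fintype.card ↥s := by
    rw [Module.finrank_pi, Fintype.card_coe]
    simpa using hbig
  obtain ⟨c, hc0, hker⟩ := exists_ker (L1.comp T) hrank
  set x : Fin n → ℂ := ∑ i : ↥s, c i • w ↑i with hx
  have hTc : T c = x := rfl
  have hL1x : ∀ j : Fin (n/2), x (av e j) + zeta α (av e j) (bv e j) * x (bv e j) = 0 := by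
    intro j
    have h0 : L1 (T c) = 0 := hker
    have := congrFun h0 j
    simpa [hL1, LinearMap.pi_apply, hTc] using this
  obtain ⟨hQ, hN⟩ := combo_facts G α w lam horth heig s c
  rw [← hx] at hQ hN
  obtain ⟨i0, hi0⟩ := Function.ne_iff.mp hc0
  have hlt : ∀ i : ↥s, lam ↑i < 2 := by
    intro i
    exact (Finset.mem_filter.mp i.2).2
  have hstrict : ∑ i : ↥s, lam ↑i * Complex.normSq (c i)
      < 2 * ∑ i : ↥s, Complex.normSq (c i) := by
    rw [Finset.mul_sum]
    refine Finset.sum_lt_sum (fun i _ => ?_) ⟨i0, Finset.mem_univ i0, ?_⟩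
    · exact mul_le_mul_of_nonneg_right (le_of_lt (hlt i)) (Complex.normSq_nonneg _)
    · have hpos : 0 < Complex.normSq (c i0) := by
        rw [Complex.normSq_pos]
        simpa using hi0
      exact mul_lt_mul_of_pos_right (hlt i0) hpos
  have hlow := quad_ge_matching hn hne G α hα e he hadj x
  have hF1 : ∀ j : Fin (n/2),
      Complex.normSq (x (av e j) - zeta α (av e j) (bv e j) * x (bv e j))
      = 2*Complex.normSq (x (av e j)) + 2*Complex.normSq (x (bv e j)) := by
    intro j
    rw [par_id _ _ _ (normSq_zeta α _ _), hL1x j]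
    simp
  have hchain : 2 * ∑ i : ↥s, Complex.normSq (c i)
      ≤ (star x ⬝ᵥ (magLap G α).mulVec x).re := by
    calc 2 * ∑ i : ↥s, Complex.normSq (c i)
        = 2 * ∑ v : Fin n, Complex.normSq (x v) := by rw [hN]
      _ = ∑ j : Fin (n/2), (2*Complex.normSq (x (av e j)) + 2*Complex.normSq (x (bv e j))) := by
          rw [norm_partition hn hne e he x, Finset.mul_sum]
          exact Finset.sum_congr rfl fun j _ => by ring
      _ = ∑ j : Fin (n/2),
            Complex.normSq (x (av e j) - zeta α (av e j) (bv e j) * x (bv e j)) :=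
          Finset.sum_congr rfl fun j _ => (hF1 j).symm
      _ ≤ ∑ j : Fin (n/2),
            (Complex.normSq (x (av e j) - zeta α (av e j) (bv e j) * x (bv e j))
             + Complex.normSq (x (bv e j) - zeta α (bv e j) (cv e j) * x (cv e j))) :=
          Finset.sum_le_sum fun j _ => by
            have := Complex.normSq_nonneg (x (bv e j) - zeta α (bv e j) (cv e j) * x (cv e j))
            linarith
      _ ≤ _ := hlow
  rw [hQ] at hchain
  linarith

lemma cast_mod_even {n : ℕ} (hne : Even n) (hn : 0 < n) (m k : ℕ) :
    ((2*m + k : ℕ) : ZMod n) = ((2*(m % (n/2)) + k : ℕ) : ZMod n) := by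
  have hmod : n % 2 = 0 := Nat.even_iff.mp hne
  obtain ⟨h, hh⟩ : ∃ h, n = 2 * h := ⟨n/2, by omega⟩
  have hd : n / 2 = h := by omega
  rw [hd]
  have h1 : h * (m / h) + m % h = m := Nat.div_add_mod m h
  have h2 : 2*m + k = n*(m/h) + (2*(m % h) + k) := by
    calc 2*m + k = 2*(h*(m/h) + m % h) + k := by rw [h1]
      _ = (2*h)*(m/h) + (2*(m%h) + k) := by ring
      _ = n*(m/h) + (2*(m%h) + k) := by rw [← hh]
  rw [h2]
  push_cast
  simp [ZMod.natCast_self]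

open Classical in
lemma core_card_le {n : ℕ} [NeZero n] (hn : 3 < n) (hne : Even n)
    (G : SimpleGraph (Fin n)) (α : Fin n → Fin n → ℝ) (hα : ∀ u v, α v u = -α u v)
    (e : ZMod n → Fin n) (he : Function.Bijective e)
    (hadj : ∀ i : ZMod n, G.Adj (e i) (e (i + 1)))
    (w : Fin n → (Fin n → ℂ)) (lam : Fin n → ℝ)
    (horth : ∀ i j, star (w i) ⬝ᵥ w j = if i = j then 1 else 0)
    (heig : ∀ i, (magLap G α).mulVec (w i) = (lam i : ℂ) • w i) :
    (Finset.univ.filter (fun i => lam i ≤ 2)).card ≤ n / 2 + 1 := by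
  by_contra hbig
  push_neg at hbig
  set s := Finset.univ.filter (fun i => lam i ≤ 2) with hs
  set L1 : (Fin n → ℂ) →ₗ[ℂ] (Fin (n/2) → ℂ) :=
    LinearMap.pi (fun j => LinearMap.proj (av e j)
      + zeta α (av e j) (bv e j) • LinearMap.proj (bv e j)) with hL1
  set T : (↥s → ℂ) →ₗ[ℂ] (Fin n → ℂ) :=
    { toFun := fun c => ∑ i : ↥s, c i • w ↑i
      map_add' := by
        intro p q
        simp only [Pi.add_apply, add_smul]
        rw [Finset.sum_add_distrib]
      map_smul' := by
        intro m p
        simp only [Pi.smul_apply, smul_eq_mul, RingHom.id_apply, ← smul_smul]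
        rw [Finset.smul_sum] } with hT
  have hrank : Module.finrank ℂ ((Fin (n/2) → ℂ) × ℂ) < Fintype.card ↥s := by
    rw [Module.finrank_prod, Module.finrank_pi, Module.finrank_self, Fintype.card_coe]
    simp only [Fintype.card_fin]
    omega
  obtain ⟨c, hc0, hker⟩ := exists_ker ((L1.prod (LinearMap.proj (e 0))).comp T) hrank
  set x : Fin n → ℂ := ∑ i : ↥s, c i • w ↑i with hx
  have hTc : T c = x := rfl
  have hker1 : L1 x = 0 ∧ x (e 0) = 0 := by
    have h0 : ((L1.prod (LinearMap.proj (e 0))).comp T) c = 0 := hker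
    rw [LinearMap.comp_apply, hTc, LinearMap.prod_apply] at h0
    exact ⟨congrArg Prod.fst h0, congrArg Prod.snd h0⟩
  have hL1x : ∀ j : Fin (n/2), x (av e j) + zeta α (av e j) (bv e j) * x (bv e j) = 0 := by
    intro j
    have := congrFun hker1.1 j
    simpa [hL1, LinearMap.pi_apply] using this
  have hE0 : x (e 0) = 0 := hker1.2
  obtain ⟨hQ, hN⟩ := combo_facts G α w lam horth heig s c
  rw [← hx] at hQ hN
  have hle2 : ∀ i : ↥s, lam ↑i ≤ 2 := fun i => (Finset.mem_filter.mp i.2).2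
  have hweak : (star x ⬝ᵥ (magLap G α).mulVec x).re ≤ 2 * ∑ i : ↥s, Complex.normSq (c i) := by
    rw [hQ, Finset.mul_sum]
    exact Finset.sum_le_sum fun i _ =>
      mul_le_mul_of_nonneg_right (hle2 i) (Complex.normSq_nonneg _)
  have hlow := quad_ge_matching hn hne G α hα e he hadj x
  have hF1 : ∀ j : Fin (n/2),
      Complex.normSq (x (av e j) - zeta α (av e j) (bv e j) * x (bv e j))
      = 2*Complex.normSq (x (av e j)) + 2*Complex.normSq (x (bv e j)) := by
    intro j
    rw [par_id _ _ _ (normSq_zeta α _ _), hL1x j]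
    simp
  have hpart : 2 * ∑ i : ↥s, Complex.normSq (c i)
      = ∑ j : Fin (n/2),
          Complex.normSq (x (av e j) - zeta α (av e j) (bv e j) * x (bv e j)) := by
    calc 2 * ∑ i : ↥s, Complex.normSq (c i)
        = 2 * ∑ v : Fin n, Complex.normSq (x v) := by rw [hN]
      _ = ∑ j : Fin (n/2), (2*Complex.normSq (x (av e j)) + 2*Complex.normSq (x (bv e j))) := by
          rw [norm_partition hn hne e he x, Finset.mul_sum]
          exact Finset.sum_congr rfl fun j _ => by ring
      _ = _ := Finset.sum_congr rfl fun j _ => (hF1 j).symm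
  have hF2sum : ∑ j : Fin (n/2),
      Complex.normSq (x (bv e j) - zeta α (bv e j) (cv e j) * x (cv e j)) ≤ 0 := by
    have h1 : ∑ j : Fin (n/2),
        (Complex.normSq (x (av e j) - zeta α (av e j) (bv e j) * x (bv e j))
         + Complex.normSq (x (bv e j) - zeta α (bv e j) (cv e j) * x (cv e j)))
        = (2 * ∑ i : ↥s, Complex.normSq (c i))
          + ∑ j : Fin (n/2),
              Complex.normSq (x (bv e j) - zeta α (bv e j) (cv e j) * x (cv e j)) := by
      rw [hpart, Finset.sum_add_distrib]
    linarith [le_trans hlow hweak, le_of_eq h1]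
  have hF2zero : ∀ j : Fin (n/2),
      Complex.normSq (x (bv e j) - zeta α (bv e j) (cv e j) * x (cv e j)) = 0 := by
    have hnn : ∀ j ∈ Finset.univ, (0:ℝ) ≤
        Complex.normSq (x (bv e j) - zeta α (bv e j) (cv e j) * x (cv e j)) :=
      fun j _ => Complex.normSq_nonneg _
    have heq : ∑ j : Fin (n/2),
        Complex.normSq (x (bv e j) - zeta α (bv e j) (cv e j) * x (cv e j)) = 0 :=
      le_antisymm hF2sum (Finset.sum_nonneg hnn)
    exact fun j => (Finset.sum_eq_zero_iff_of_nonneg hnn).mp heq j (Finset.mem_univ j)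
  have hrel2 : ∀ j : Fin (n/2), x (bv e j) = zeta α (bv e j) (cv e j) * x (cv e j) :=
    fun j => sub_eq_zero.mp (Complex.normSq_eq_zero.mp (hF2zero j))
  have hrel1 : ∀ j : Fin (n/2), x (av e j) = -(zeta α (av e j) (bv e j) * x (bv e j)) :=
    fun j => eq_neg_of_add_eq_zero_left (hL1x j)
  -- propagation of zeros around the cycle
  have hn2pos : 0 < n / 2 := by omega
  have hprop : ∀ t : ℕ, x (e ((t : ℕ) : ZMod n)) = 0 := by
    intro t
    induction t with
    | zero => simpa using hE0
    | succ t ih =>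
      rcases Nat.even_or_odd t with ⟨m, hm⟩ | ⟨m, hm⟩
      · set j : Fin (n/2) := ⟨m % (n/2), Nat.mod_lt _ hn2pos⟩ with hj
        have hjv : (j.val : ℕ) = m % (n/2) := rfl
        have h1 : ((t : ℕ) : ZMod n) = ((2*j.val : ℕ) : ZMod n) := by
          rw [show t = 2*m + 0 by omega, cast_mod_even hne (by omega) m 0, hjv]
          norm_num
        have h2 : ((t+1 : ℕ) : ZMod n) = ((2*j.val + 1 : ℕ) : ZMod n) := by
          rw [show t+1 = 2*m + 1 by omega, cast_mod_even hne (by omega) m 1, hjv]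
        have hav : x (av e j) = 0 := by
          show x (e ((2*j.val : ℕ) : ZMod n)) = 0
          rw [← h1]
          exact ih
        have hbv : x (bv e j) = 0 := by
          have h3 := hrel1 j
          rw [hav] at h3
          have h4 : zeta α (av e j) (bv e j) * x (bv e j) = 0 := by
            linear_combination h3
          rcases mul_eq_zero.mp h4 with h5 | h5
          · exact absurd h5 (zeta_ne_zero α _ _)
          · exact h5
        show x (e ((t+1 : ℕ) : ZMod n)) = 0
        rw [h2]
        exact hbv
      · set j : Fin (n/2) := ⟨m % (n/2), Nat.mod_lt _ hn2pos⟩ with hj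
        have hjv : (j.val : ℕ) = m % (n/2) := rfl
        have h1 : ((t : ℕ) : ZMod n) = ((2*j.val + 1 : ℕ) : ZMod n) := by
          rw [show t = 2*m + 1 by omega, cast_mod_even hne (by omega) m 1, hjv]
        have h2 : ((t+1 : ℕ) : ZMod n) = ((2*j.val + 2 : ℕ) : ZMod n) := by
          rw [show t+1 = 2*m + 2 by omega, cast_mod_even hne (by omega) m 2, hjv]
        have hbv : x (bv e j) = 0 := by
          show x (e ((2*j.val + 1 : ℕ) : ZMod n)) = 0
          rw [← h1]
          exact ih
        have hcv : x (cv e j) = 0 := by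
          have h3 := hrel2 j
          rw [hbv] at h3
          rcases mul_eq_zero.mp h3.symm with h5 | h5
          · exact absurd h5 (zeta_ne_zero α _ _)
          · exact h5
        show x (e ((t+1 : ℕ) : ZMod n)) = 0
        rw [h2]
        exact hcv
  have hx0 : ∀ v : Fin n, x v = 0 := by
    intro v
    obtain ⟨i, rfl⟩ := he.2 v
    have h1 : i = ((i.val : ℕ) : ZMod n) := (ZMod.natCast_rightInverse i).symm
    rw [h1]
    exact hprop i.val
  have hsum : ∑ i : ↥s, Complex.normSq (c i) = 0 := by
    rw [← hN]
    exact Finset.sum_eq_zero fun v _ => by rw [hx0 v]; simp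
  obtain ⟨i0, hi0⟩ := Function.ne_iff.mp hc0
  have h2 := (Finset.sum_eq_zero_iff_of_nonneg
    (fun i _ => Complex.normSq_nonneg (c i))).mp hsum i0 (Finset.mem_univ _)
  exact hi0 (by simpa [Complex.normSq_eq_zero] using h2)

lemma exists_cycle_map {n : ℕ} (hn : 3 < n) (G : SimpleGraph (Fin n))
    (hham : G.IsHamiltonian) :
    ∃ e : ZMod n → Fin n, Function.Bijective e ∧ ∀ i : ZMod n, G.Adj (e i) (e (i + 1)) := by
  haveI : NeZero n := ⟨by omega⟩
  obtain ⟨a, p, hp⟩ := hham (by simp [Fintype.card_fin]; omega)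
  have hlen : p.length = n := by
    simpa [Fintype.card_fin] using hp.length_eq
  have h0 : p.getVert 0 = a := p.getVert_zero
  have hn' : p.getVert n = a := by
    have := p.getVert_length
    rwa [hlen] at this
  refine ⟨fun i => p.getVert i.val, ?_, ?_⟩
  · rw [Fintype.bijective_iff_surjective_and_card]
    constructor
    · intro v
      have hv := hp.mem_support v
      rw [SimpleGraph.Walk.mem_support_iff_exists_getVert] at hv
      obtain ⟨k, hk, hkl⟩ := hv
      rw [hlen] at hkl
      rcases lt_or_eq_of_le hkl with h | h
      · exact ⟨(k : ZMod n), by show p.getVert _ = v; rw [ZMod.val_natCast_of_lt h, hk]⟩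
      · refine ⟨0, ?_⟩
        show p.getVert (0 : ZMod n).val = v
        rw [ZMod.val_zero, h0, ← hn']
        exact h ▸ hk
    · simp [ZMod.card]
  · intro i
    have hiv : i.val < n := i.val_lt
    show G.Adj (p.getVert i.val) (p.getVert (i + 1).val)
    rcases lt_or_eq_of_le (Nat.succ_le_of_lt hiv) with h | h
    · have hval : (i + 1).val = i.val + 1 := by
        rw [ZMod.val_add, ZMod.val_one'' (by omega)]
        exact Nat.mod_eq_of_lt h
      rw [hval]
      exact p.adj_getVert_succ (by omega)
    · have hval : (i + 1).val = 0 := by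
        have h4 : i.val + 1 = n := h
        rw [ZMod.val_add, ZMod.val_one'' (by omega), h4]
        simp
      rw [hval]
      have h2 := p.adj_getVert_succ (i := n - 1) (by omega)
      have h3 : G.Adj (p.getVert (n-1)) (p.getVert n) := by
        convert h2 using 2
        omega
      have hi' : i.val = n - 1 := by omega
      rw [hi', h0]
      rw [hn'] at h3
      exact h3

/-- A Hamiltonian graph on an even number `n > 3` of vertices
satisfies `2 ≤ λ_{n/2+1}(Δ_α^G)` and `2 < λ_{n/2+2}(Δ_α^G)` for every magnetic
potential `α`. -/
theorem hamiltonian_even_eigenvalue_bounds {n : ℕ} (G : SimpleGraph (Fin n))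
    (hn : 3 < n) (hne : Even n) (hham : G.IsHamiltonian)
    (α : Fin n → Fin n → ℝ) (hα : ∀ u v, α v u = -α u v) :
    ((2 : ℝ) : EReal) ≤ lamb (magLap_isHermitian G α hα) (n / 2 + 1) ∧
    ((2 : ℝ) : EReal) < lamb (magLap_isHermitian G α hα) (n / 2 + 2) := by
  classical
  haveI : NeZero n := ⟨by omega⟩
  obtain ⟨e, he, hadj⟩ := exists_cycle_map hn G hham
  have hA : (magLap G α).IsHermitian := magLap_isHermitian G α hα
  have horth : ∀ i j, star (⇑(hA.eigenvectorBasis i) : Fin n → ℂ) ⬝ᵥ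
      (⇑(hA.eigenvectorBasis j) : Fin n → ℂ) = if i = j then 1 else 0 := by
    intro i j
    have h1 := hA.eigenvectorBasis.orthonormal
    rw [orthonormal_iff_ite] at h1
    have h2 := h1 i j
    rw [PiLp.inner_apply] at h2
    simp only [RCLike.inner_apply] at h2
    simpa [dotProduct, Pi.star_apply, Complex.star_def, mul_comm] using h2
  have heig : ∀ i, (magLap G α).mulVec (⇑(hA.eigenvectorBasis i) : Fin n → ℂ)
      = ((hA.eigenvalues i : ℝ) : ℂ) • (⇑(hA.eigenvectorBasis i) : Fin n → ℂ) := by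
    intro i
    have h1 := hA.mulVec_eigenvectorBasis i
    rw [h1]
    funext k
    simp [Complex.real_smul]
  have hcount1 : (Finset.univ.filter (fun i => hA.eigenvalues i < 2)).card ≤ n / 2 :=
    core_card_lt hn hne G α hα e he hadj _ _ horth heig
  have hcount2 : (Finset.univ.filter (fun i => hA.eigenvalues i ≤ 2)).card ≤ n / 2 + 1 :=
    core_card_le hn hne G α hα e he hadj _ _ horth heig
  have hmono := Tuple.monotone_sort hA.eigenvalues
  constructor
  · unfold lamb
    rw [dif_pos (show 1 ≤ n/2+1 ∧ n/2+1 ≤ n by omega)]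
    rw [EReal.coe_le_coe_iff]
    refine sorted_ge_of_count hmono 2 _ ?_
    have hcf := card_filter_perm (Tuple.sort hA.eigenvalues)
      (fun i => hA.eigenvalues i < 2)
    calc (Finset.univ.filter
          (fun i => (hA.eigenvalues ∘ Tuple.sort hA.eigenvalues) i < 2)).card
        = (Finset.univ.filter (fun i => hA.eigenvalues i < 2)).card := hcf
      _ ≤ n / 2 := hcount1
      _ = ((⟨n/2+1-1, by omega⟩ : Fin n) : ℕ) := by simp
  · unfold lamb
    rw [dif_pos (show 1 ≤ n/2+2 ∧ n/2+2 ≤ n by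
      constructor
      · omega
      · have : n % 2 = 0 := Nat.even_iff.mp hne
        omega)]
    rw [EReal.coe_lt_coe_iff]
    refine sorted_gt_of_count hmono 2 _ ?_
    have hcf := card_filter_perm (Tuple.sort hA.eigenvalues)
      (fun i => hA.eigenvalues i ≤ 2)
    calc (Finset.univ.filter
          (fun i => (hA.eigenvalues ∘ Tuple.sort hA.eigenvalues) i ≤ 2)).card
        = (Finset.univ.filter (fun i => hA.eigenvalues i ≤ 2)).card := hcf
      _ ≤ n / 2 + 1 := hcount2
      _ = ((⟨n/2+2-1, by omega⟩ : Fin n) : ℕ) := by simp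
end

section
/- Let G be a finite simple graph on n vertices, where n is even, and suppose there exists a magnetic potential α on G with λ_{n/2+1}(Δ_α^G) < 2. Then G has no Hamiltonian cycle. -/
set_option linter.unnecessarySeqFocus false

open Finset Matrix Classical in
private lemma magLap_quadForm {n : ℕ} (G : SimpleGraph (Fin n)) (α : Fin n → Fin n → ℝ)
    (hα : ∀ u v, α v u = -α u v) (x : Fin n → ℂ) :
    star x ⬝ᵥ (magLap G α) *ᵥ x =
      (((1/2 : ℝ) * ∑ u, ∑ v, if G.Adj u v then
        Complex.normSq (x u - Complex.exp (α u v * Complex.I) * x v) else 0 : ℝ) : ℂ) := by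
  set T1 : ℂ := ∑ u, ∑ v, if G.Adj u v then star (x u) * x u else 0 with hT1
  set T2 : ℂ := ∑ u, ∑ v, if G.Adj u v then
      Complex.exp (α u v * Complex.I) * (star (x u) * x v) else 0 with hT2
  have hdeg : ∀ u : Fin n, ((G.neighborSet u).ncard : ℂ) = ∑ v, if G.Adj u v then (1:ℂ) else 0 := by
    intro u
    have h1 : (G.neighborSet u).toFinset = Finset.univ.filter (G.Adj u) := by
      ext v; simp
    rw [Set.ncard_eq_toFinset_card', h1, Finset.sum_boole]
  have hsplit : ∀ u v, magLap G α u v * x v =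
      (if u = v then ((G.neighborSet u).ncard : ℂ) * x v else 0)
        + (if G.Adj u v then -(Complex.exp (α u v * Complex.I)) * x v else 0) := by
    intro u v
    by_cases huv : u = v
    · subst huv; simp [magLap]
    · by_cases hadj : G.Adj u v <;> simp [magLap, huv, hadj]
  have hL : star x ⬝ᵥ (magLap G α) *ᵥ x = T1 - T2 := by
    calc star x ⬝ᵥ (magLap G α) *ᵥ x
        = ∑ u, star (x u) * ∑ v, magLap G α u v * x v := by
          simp [dotProduct, Matrix.mulVec]
      _ = ∑ u, ∑ v, star (x u) * (magLap G α u v * x v) := by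
          simp [Finset.mul_sum]
      _ = ∑ u, ∑ v, ((if u = v then star (x u) * (((G.neighborSet u).ncard : ℂ) * x v) else 0)
            + (if G.Adj u v then star (x u) * (-(Complex.exp (α u v * Complex.I)) * x v) else 0)) := by
          refine Finset.sum_congr rfl fun u _ => Finset.sum_congr rfl fun v _ => ?_
          rw [hsplit u v, mul_add, mul_ite, mul_ite]; simp
      _ = ∑ u, (star (x u) * (((G.neighborSet u).ncard : ℂ) * x u)
            + ∑ v, (if G.Adj u v then star (x u) * (-(Complex.exp (α u v * Complex.I)) * x v) else 0)) := by
          refine Finset.sum_congr rfl fun u _ => ?_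
          rw [Finset.sum_add_distrib, Finset.sum_ite_eq]
          simp
      _ = T1 - T2 := by
          rw [hT1, hT2, ← Finset.sum_sub_distrib]
          refine Finset.sum_congr rfl fun u _ => ?_
          rw [hdeg u, Finset.sum_mul, Finset.mul_sum, ← Finset.sum_sub_distrib,
            ← Finset.sum_add_distrib]
          refine Finset.sum_congr rfl fun v _ => ?_
          by_cases hadj : G.Adj u v <;> simp [hadj] <;> ring
  have hconj : ∀ u v : Fin n, (starRingEnd ℂ) (Complex.exp (α u v * Complex.I))
      = Complex.exp (α v u * Complex.I) := by
    intro u v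
    rw [← Complex.exp_conj, _root_.map_mul, Complex.conj_ofReal, Complex.conj_I, hα u v]
    congr 1
    push_cast
    ring
  have hexp1 : ∀ u v : Fin n, Complex.exp (α v u * Complex.I) * Complex.exp (α u v * Complex.I)
      = 1 := by
    intro u v
    rw [← Complex.exp_add, hα u v]
    push_cast
    rw [show (-(α u v : ℂ)) * Complex.I + (α u v : ℂ) * Complex.I = 0 by ring, Complex.exp_zero]
  have hterm : ∀ u v : Fin n,
      ((Complex.normSq (x u - Complex.exp (α u v * Complex.I) * x v) : ℝ) : ℂ)
        = star (x u) * x u + star (x v) * x v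
          - Complex.exp (α u v * Complex.I) * (star (x u) * x v)
          - Complex.exp (α v u * Complex.I) * (star (x v) * x u) := by
    intro u v
    rw [Complex.normSq_eq_conj_mul_self]
    simp only [map_sub, _root_.map_mul, hconj u v, RCLike.star_def]
    linear_combination ((starRingEnd ℂ) (x v) * x v) * hexp1 u v
  set T1' : ℂ := ∑ u, ∑ v, if G.Adj u v then star (x v) * x v else 0 with hT1'd
  set T2' : ℂ := ∑ u, ∑ v, if G.Adj u v then
      Complex.exp (α v u * Complex.I) * (star (x v) * x u) else 0 with hT2'd
  have hT1' : T1' = T1 := by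
    rw [hT1'd, hT1, Finset.sum_comm]
    exact Finset.sum_congr rfl fun v _ => Finset.sum_congr rfl fun u _ =>
      if_congr (G.adj_comm u v) rfl rfl
  have hT2' : T2' = T2 := by
    rw [hT2'd, hT2, Finset.sum_comm]
    exact Finset.sum_congr rfl fun v _ => Finset.sum_congr rfl fun u _ =>
      if_congr (G.adj_comm u v) rfl rfl
  have hsum : ∑ u, ∑ v, (if G.Adj u v then
        ((Complex.normSq (x u - Complex.exp (α u v * Complex.I) * x v) : ℝ) : ℂ) else 0)
      = T1 + T1' - T2 - T2' := by
    have hpt : ∀ u v : Fin n, (if G.Adj u v then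
        ((Complex.normSq (x u - Complex.exp (α u v * Complex.I) * x v) : ℝ) : ℂ) else 0)
        = (if G.Adj u v then star (x u) * x u else 0)
          + (if G.Adj u v then star (x v) * x v else 0)
          - (if G.Adj u v then Complex.exp (α u v * Complex.I) * (star (x u) * x v) else 0)
          - (if G.Adj u v then Complex.exp (α v u * Complex.I) * (star (x v) * x u) else 0) := by
      intro u v
      by_cases hadj : G.Adj u v
      · simp only [hadj, if_true, hterm u v]
      · simp [hadj]
    rw [hT1, hT1'd, hT2, hT2'd]
    simp_rw [hpt, Finset.sum_sub_distrib, Finset.sum_add_distrib]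
  have hR : (((1/2 : ℝ) * ∑ u, ∑ v, if G.Adj u v then
        Complex.normSq (x u - Complex.exp (α u v * Complex.I) * x v) else 0 : ℝ) : ℂ)
      = (1/2 : ℂ) * ∑ u, ∑ v, (if G.Adj u v then
        ((Complex.normSq (x u - Complex.exp (α u v * Complex.I) * x v) : ℝ) : ℂ) else 0) := by
    push_cast [apply_ite (Complex.ofReal)]
    norm_num
  rw [hL, hR, hsum, hT1', hT2']
  ring

private lemma exists_involution {n : ℕ} (G : SimpleGraph (Fin n)) (hn : Even n) (h2 : 2 ≤ n)
    (hG : G.IsHamiltonian) :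
    ∃ σ : Fin n → Fin n, (∀ v, σ (σ v) = v) ∧ (∀ v, σ v ≠ v) ∧ (∀ v, G.Adj v (σ v)) := by
  classical
  obtain ⟨a, p, hp⟩ := hG (by simp; omega)
  set l : List (Fin n) := p.support.tail with hl
  have hlen : l.length = n := by
    have h1 : p.support.length = p.length + 1 := SimpleGraph.Walk.length_support p
    have h2' : p.length = n := by simpa using hp.length_eq
    simp [hl, h1, h2']
  have hnodup : l.Nodup := by
    rw [hl, ← SimpleGraph.Walk.support_tail_of_not_nil p hp.1.not_nil]
    exact List.nodup_iff_count_le_one.2 fun v => le_of_eq (hp.isHamiltonian_tail v)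
  have hchain : List.Chain' G.Adj l := (SimpleGraph.Walk.isChain_adj_support p).tail
  obtain ⟨m, hm⟩ := hn
  set g : Fin n → Fin n := fun i => l.get ⟨i.val, by rw [hlen]; exact i.isLt⟩ with hg
  have ginj : Function.Injective g := by
    intro i j hij
    have h3 := (List.Nodup.get_inj_iff hnodup).mp hij
    have h4 := congrArg Fin.val h3
    exact Fin.ext h4
  have hadj : ∀ (i j : ℕ) (h1 : i < n) (h2 : j < n), j = i + 1 →
      G.Adj (g ⟨i, h1⟩) (g ⟨j, h2⟩) := by
    intro i j h1' h2' hij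
    subst hij
    have := List.isChain_iff_getElem.mp hchain i (by omega)
    simpa [hg, hlen] using this
  set τ : Fin n → Fin n := fun i =>
    if h : i.val % 2 = 0 then ⟨i.val + 1, by omega⟩ else ⟨i.val - 1, by omega⟩ with hτ
  have hτval : ∀ i : Fin n, (τ i).val = if i.val % 2 = 0 then i.val + 1 else i.val - 1 := by
    intro i
    by_cases h : i.val % 2 = 0 <;> simp [hτ, h]
  have hττ : ∀ i, τ (τ i) = i := by
    intro i
    have hi := i.isLt
    by_cases h : i.val % 2 = 0
    · have h1 : τ i = ⟨i.val + 1, by omega⟩ := by simp [hτ, h]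
      have h2 : τ (⟨i.val + 1, by omega⟩ : Fin n) = i := by
        have hne : ¬ ((i.val + 1) % 2 = 0) := by omega
        apply Fin.ext
        simp [hτ, hne]
      rw [h1, h2]
    · have h0 : 1 ≤ i.val := by omega
      have h1 : τ i = ⟨i.val - 1, by omega⟩ := by simp [hτ, h]
      have h2 : τ (⟨i.val - 1, by omega⟩ : Fin n) = i := by
        have hz : (i.val - 1) % 2 = 0 := by omega
        apply Fin.ext
        simp [hτ, hz]
        omega
      rw [h1, h2]
  have hτne : ∀ i, τ i ≠ i := by
    intro i hcon
    have := congrArg Fin.val hcon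
    rw [hτval] at this
    by_cases h : i.val % 2 = 0 <;> simp [h] at this <;> omega
  have hτadj : ∀ i, G.Adj (g i) (g (τ i)) := by
    intro i
    have hi := i.isLt
    by_cases h : i.val % 2 = 0
    · have : τ i = ⟨i.val + 1, by omega⟩ := by simp [hτ, h]
      rw [this]
      exact hadj i.val (i.val + 1) i.isLt (by omega) rfl
    · have h1 : 1 ≤ i.val := by omega
      have : τ i = ⟨i.val - 1, by omega⟩ := by simp [hτ, h]
      rw [this]
      exact (hadj (i.val - 1) i.val (by omega) i.isLt (by omega)).symm
  set e : Fin n ≃ Fin n := Equiv.ofBijective g (Finite.injective_iff_bijective.mp ginj) with he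
  have hge : ∀ i, e i = g i := fun i => rfl
  refine ⟨fun v => e (τ (e.symm v)), fun v => ?_, fun v hcon => ?_, fun v => ?_⟩
  · simp only [Equiv.symm_apply_apply, hττ, Equiv.apply_symm_apply]
  · exact hτne (e.symm v) (e.injective (hcon.trans (Equiv.apply_symm_apply e v).symm))
  · have := hτadj (e.symm v)
    rw [← hge, ← hge, Equiv.apply_symm_apply] at this
    exact this

open Matrix in
private lemma dot_sum_left {n m : ℕ} (f : Fin m → (Fin n → ℂ)) (y : Fin n → ℂ) :
    (∑ k, f k) ⬝ᵥ y = ∑ k, f k ⬝ᵥ y := by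
  simp only [dotProduct, Finset.sum_apply, Finset.sum_mul]
  exact Finset.sum_comm

open Matrix in
private lemma dot_sum_right {n m : ℕ} (x : Fin n → ℂ) (f : Fin m → (Fin n → ℂ)) :
    x ⬝ᵥ (∑ k, f k) = ∑ k, x ⬝ᵥ f k := by
  simp only [dotProduct, Finset.sum_apply, Finset.mul_sum]
  exact Finset.sum_comm

open Matrix in
private lemma dot_eigen {n m : ℕ} (E : Fin m → (Fin n → ℂ))
    (horth : ∀ k l : Fin m, star (E k) ⬝ᵥ E l = if k = l then (1:ℂ) else 0)
    (c d : Fin m → ℂ) :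
    star (∑ k, c k • E k) ⬝ᵥ (∑ k, d k • E k) = ∑ k, (starRingEnd ℂ) (c k) * d k := by
  have hstar : star (∑ k, c k • E k) = ∑ k, (starRingEnd ℂ) (c k) • star (E k) := by
    rw [star_sum]
    exact Finset.sum_congr rfl fun k _ => by rw [star_smul]; rfl
  rw [hstar, dot_sum_left]
  refine Finset.sum_congr rfl fun k _ => ?_
  rw [smul_dotProduct, dot_sum_right]
  simp only [dotProduct_smul, horth, smul_eq_mul, mul_ite, mul_one, mul_zero]
  rw [Finset.sum_ite_eq Finset.univ k (fun l => d l), if_pos (Finset.mem_univ k)]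

open Matrix Finset Classical in
/-- If `G` has an even number `n` of vertices and some magnetic
potential `α` satisfies `λ_{n/2+1}(Δ_α^G) < 2`, then `G` has no Hamiltonian cycle. -/
theorem spectral_obstruction_hamiltonian {n : ℕ} (G : SimpleGraph (Fin n)) (hn : Even n)
    (α : Fin n → Fin n → ℝ) (hα : ∀ u v, α v u = -α u v)
    (h : lamb (magLap_isHermitian G α hα) (n / 2 + 1) < ((2 : ℝ) : EReal)) :
    ¬ G.IsHamiltonian := by
  intro hG
  rcases Nat.eq_zero_or_pos n with hn0 | hpos
  · subst hn0
    obtain ⟨a, p, hp⟩ := hG (by simp)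
    exact a.elim0
  have h2 : 2 ≤ n := by obtain ⟨m, hm⟩ := hn; omega
  obtain ⟨σ, hσσ, hσne, hσadj⟩ := exists_involution G hn h2 hG
  set hA := magLap_isHermitian G α hα with hAdef
  have hcond : 1 ≤ n / 2 + 1 ∧ n / 2 + 1 ≤ n := ⟨by omega, by omega⟩
  rw [lamb, dif_pos hcond, EReal.coe_lt_coe_iff] at h
  set J : Fin (n/2+1) → Fin n := fun k => Tuple.sort hA.eigenvalues ⟨k.val, by omega⟩ with hJd
  have hJ : Function.Injective J := by
    intro k1 k2 hk
    have h3 := (Tuple.sort hA.eigenvalues).injective hk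
    have h4 := congrArg Fin.val h3
    exact Fin.ext h4
  have heig : ∀ k, hA.eigenvalues (J k) < 2 := by
    intro k
    have hmono := Tuple.monotone_sort hA.eigenvalues
    have hle : (⟨k.val, by omega⟩ : Fin n) ≤ ⟨n / 2 + 1 - 1, by omega⟩ := by
      rw [Fin.le_def]
      simp
      omega
    exact lt_of_le_of_lt (hmono hle) h
  set E : Fin (n/2+1) → (Fin n → ℂ) := fun k => ⇑(hA.eigenvectorBasis (J k)) with hE
  have horth : ∀ k l, star (E k) ⬝ᵥ E l = if k = l then (1:ℂ) else 0 := by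
    intro k l
    have h1 := orthonormal_iff_ite.mp hA.eigenvectorBasis.orthonormal (J k) (J l)
    rw [EuclideanSpace.inner_eq_star_dotProduct] at h1
    simp only [hJ.eq_iff] at h1
    rw [dotProduct_comm] at h1
    exact h1
  -- the subtype of matched pairs
  have hcardR : Fintype.card {v : Fin n // v < σ v} = n / 2 := by
    have hbij : (Finset.univ.filter (fun v : Fin n => v < σ v)).card
        = (Finset.univ.filter (fun v : Fin n => σ v < v)).card := by
      apply Finset.card_bij (fun a _ => σ a)
      · intro a ha
        simp only [Finset.mem_filter, Finset.mem_univ, true_and] at ha ⊢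
        rw [hσσ]; exact ha
      · intro a ha b hb hab
        have := congrArg σ hab
        rwa [hσσ, hσσ] at this
      · intro b hb
        simp only [Finset.mem_filter, Finset.mem_univ, true_and] at hb ⊢
        exact ⟨σ b, by rw [hσσ]; exact hb, hσσ b⟩
    have hsplit := Finset.card_filter_add_card_filter_not
      (s := (Finset.univ : Finset (Fin n))) (p := fun v : Fin n => v < σ v)
    have hneg : Finset.univ.filter (fun v : Fin n => ¬ v < σ v)
        = Finset.univ.filter (fun v : Fin n => σ v < v) := by
      ext v
      simp only [Finset.mem_filter, Finset.mem_univ, true_and]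
      constructor
      · exact fun hv => lt_of_le_of_ne (le_of_not_gt hv) (hσne v)
      · exact fun hv => asymm hv
    rw [hneg, hbij] at hsplit
    rw [Fintype.card_subtype]
    obtain ⟨m, hm⟩ := hn
    simp only [Finset.card_univ, Fintype.card_fin] at hsplit
    omega
  set Fm : (Fin (n/2+1) → ℂ) →ₗ[ℂ] (Fin n → ℂ) :=
    { toFun := fun c => ∑ k, c k • E k,
      map_add' := by
        intro a b
        simp only [Pi.add_apply, add_smul, Finset.sum_add_distrib]
      map_smul' := by
        intro r a
        simp only [Pi.smul_apply, smul_eq_mul, RingHom.id_apply, ← smul_smul, ← Finset.smul_sum] }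
    with hFmd
  set L : (Fin (n/2+1) → ℂ) →ₗ[ℂ] ({v : Fin n // v < σ v} → ℂ) :=
    LinearMap.pi (fun v : {v : Fin n // v < σ v} =>
      (Complex.exp (α v.1 (σ v.1) * Complex.I) • LinearMap.proj (σ v.1)
        + LinearMap.proj v.1).comp Fm) with hLd
  have hnoinj : ¬ Function.Injective L := by
    intro hinj
    have hd := LinearMap.finrank_le_finrank_of_injective hinj
    rw [Module.finrank_pi, Module.finrank_pi, Fintype.card_fin, hcardR] at hd
    omega
  rw [← LinearMap.ker_eq_bot] at hnoinj
  obtain ⟨c, hcker, hc0⟩ := Submodule.exists_mem_ne_zero_of_ne_bot hnoinj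
  rw [LinearMap.mem_ker] at hcker
  set f : Fin n → ℂ := ∑ k, c k • E k with hfd
  have hFmc : Fm c = f := rfl
  have hfL : ∀ v : {v : Fin n // v < σ v},
      Complex.exp (α v.1 (σ v.1) * Complex.I) * f (σ v.1) + f v.1 = 0 := by
    intro v
    have h1 := congrFun hcker v
    simp only [hLd, LinearMap.pi_apply, LinearMap.comp_apply, LinearMap.add_apply,
      LinearMap.smul_apply, LinearMap.proj_apply, hFmc, smul_eq_mul, Pi.zero_apply] at h1
    exact h1
  have hrel : ∀ v, Complex.exp (α v (σ v) * Complex.I) * f (σ v) = - f v := by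
    intro v
    rcases lt_or_gt_of_ne (Ne.symm (hσne v)) with hlt | hgt
    · have h1 := hfL ⟨v, hlt⟩
      linear_combination h1
    · have hv' : σ v < σ (σ v) := by rw [hσσ]; exact hgt
      have h1 := hfL ⟨σ v, hv'⟩
      simp only [hσσ] at h1
      have hexp1 : Complex.exp (α v (σ v) * Complex.I)
          * Complex.exp (α (σ v) v * Complex.I) = 1 := by
        rw [← Complex.exp_add, hα v (σ v)]
        push_cast
        rw [show (α v (σ v) : ℂ) * Complex.I + (-(α v (σ v) : ℂ)) * Complex.I = 0 by ring,
          Complex.exp_zero]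
      linear_combination Complex.exp (α v (σ v) * Complex.I) * h1 - f v * hexp1
  have hlow : 2 * (∑ v, Complex.normSq (f v)) ≤ (1/2 : ℝ) * ∑ u, ∑ v,
      (if G.Adj u v then Complex.normSq (f u - Complex.exp (α u v * Complex.I) * f v) else 0) := by
    have hterm : ∀ u, Complex.normSq (f u - Complex.exp (α u (σ u) * Complex.I) * f (σ u))
        = 4 * Complex.normSq (f u) := by
      intro u
      rw [hrel u, sub_neg_eq_add, ← two_mul, Complex.normSq_mul]
      norm_num [Complex.normSq_apply]
    have hinner : ∀ u : Fin n, 4 * Complex.normSq (f u) ≤ ∑ v,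
        (if G.Adj u v then Complex.normSq (f u - Complex.exp (α u v * Complex.I) * f v) else 0) := by
      intro u
      have h1 := Finset.single_le_sum (f := fun v =>
          (if G.Adj u v then Complex.normSq (f u - Complex.exp (α u v * Complex.I) * f v) else 0))
        (fun v _ => by by_cases hh : G.Adj u v <;> simp [hh, Complex.normSq_nonneg])
        (Finset.mem_univ (σ u))
      rwa [if_pos (hσadj u), hterm u] at h1
    have h2' := Finset.sum_le_sum (fun u (_ : u ∈ Finset.univ) => hinner u)
    rw [← Finset.mul_sum] at h2'
    linarith
  have hAf : (magLap G α) *ᵥ f = ∑ k, ((hA.eigenvalues (J k) : ℂ) * c k) • E k := by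
    rw [hfd, ← Matrix.mulVecLin_apply, map_sum]
    refine Finset.sum_congr rfl fun k _ => ?_
    rw [_root_.map_smul, Matrix.mulVecLin_apply]
    have h1 : (magLap G α) *ᵥ E k = hA.eigenvalues (J k) • E k := hA.mulVec_eigenvectorBasis (J k)
    rw [h1]
    funext i
    simp only [Pi.smul_apply, smul_eq_mul, Complex.real_smul]
    ring
  have hdot1 : star f ⬝ᵥ (magLap G α) *ᵥ f
      = ((∑ k, Complex.normSq (c k) * hA.eigenvalues (J k) : ℝ) : ℂ) := by
    rw [hfd, hAf, dot_eigen E horth c _]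
    push_cast
    refine Finset.sum_congr rfl fun k _ => ?_
    rw [show ((Complex.normSq (c k) : ℂ)) = (starRingEnd ℂ) (c k) * c k from
      Complex.normSq_eq_conj_mul_self]
    ring
  have hdot2 : star f ⬝ᵥ f = ((∑ k, Complex.normSq (c k) : ℝ) : ℂ) := by
    have h1 := dot_eigen E horth c c
    rw [hfd, h1]
    push_cast
    exact Finset.sum_congr rfl fun k _ => (Complex.normSq_eq_conj_mul_self).symm
  have hdot3 : star f ⬝ᵥ f = ((∑ v, Complex.normSq (f v) : ℝ) : ℂ) := by
    push_cast
    simp only [dotProduct, Pi.star_apply]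
    exact Finset.sum_congr rfl fun v _ => Complex.normSq_eq_conj_mul_self.symm
  have hsumf : ∑ v, Complex.normSq (f v) = ∑ k, Complex.normSq (c k) := by
    have := hdot3.symm.trans hdot2
    exact_mod_cast this
  have hq := magLap_quadForm G α hα f
  have hqs : (1/2 : ℝ) * ∑ u, ∑ v, (if G.Adj u v then
        Complex.normSq (f u - Complex.exp (α u v * Complex.I) * f v) else 0)
      = ∑ k, Complex.normSq (c k) * hA.eigenvalues (J k) := by
    have := hq.symm.trans hdot1
    exact_mod_cast this
  obtain ⟨k0, hk0⟩ := Function.ne_iff.mp hc0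
  have hstrict : ∑ k, Complex.normSq (c k) * hA.eigenvalues (J k)
      < ∑ k, Complex.normSq (c k) * 2 := by
    apply Finset.sum_lt_sum
    · exact fun k _ => mul_le_mul_of_nonneg_left (le_of_lt (heig k)) (Complex.normSq_nonneg _)
    · exact ⟨k0, Finset.mem_univ _,
        mul_lt_mul_of_pos_left (heig k0) (Complex.normSq_pos.mpr hk0)⟩
  have hfin : ∑ k, Complex.normSq (c k) * 2 = 2 * ∑ k, Complex.normSq (c k) := by
    rw [← Finset.sum_mul]
    ring
  rw [hqs] at hlow
  rw [hfin] at hstrict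
  rw [hsumf] at hlow
  linarith
end
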